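/- Let f : ℝⁿ → ℝ be twice continuously differentiable with Hessian Lipschitz continuous with constant L (in operator norm), let x, y ∈ ℝⁿ, and suppose ∇²f(x) is invertible. Set z = ∇²f(x)(y − x). If d ∈ ℝⁿ satisfies the Newton-direction interpolating condition zᵀ d = −f(y) + f(x) + ½ (y − x)ᵀ z, then |zᵀ ( −∇²f(x)⁻¹ ∇f(x) − d )| ≤ (L/6) ‖y − x‖³. -/

import Mathlib

open scoped RealInnerProductSpace
open InnerProductSpace Set

section auxNewton
variable {n : ℕ}
local notation "EE" => EuclideanSpace ℝ (Fin n)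

/-- Symmetry of the Hessian. -/
theorem aux_hess_symm (f : EE → ℝ) (g : EE → EE) (hess : EE → EE →L[ℝ] EE)
    (hg : ∀ u, HasGradientAt f (g u) u) (hhess : ∀ u, HasFDerivAt g (hess u) u)
    (x a b : EE) : ⟪hess x a, b⟫ = ⟪hess x b, a⟫ := by
  set T := (toDual ℝ EE).toContinuousLinearEquiv.toContinuousLinearMap with hT
  have hf' : ∀ u, HasFDerivAt f (toDual ℝ EE (g u)) u := fun u => (hg u).hasFDerivAt
  have hcomp : HasFDerivAt (fun u => toDual ℝ EE (g u)) (T.comp (hess x)) x :=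
    T.hasFDerivAt.comp x (hhess x)
  have := second_derivative_symmetric hf' hcomp a b
  simpa [hT, toDual_apply_apply] using this

/-- First-order Taylor estimate for the gradient along a segment. -/
theorem aux_grad_taylor (g : EE → EE) (hess : EE → EE →L[ℝ] EE) (L : ℝ)
    (hhess : ∀ u, HasFDerivAt g (hess u) u)
    (hLip : ∀ u v, ‖hess u - hess v‖ ≤ L * ‖u - v‖)
    (x v : EE) :
    ∀ t ∈ Icc (0:ℝ) 1, ‖g (x + t • v) - g x - t • hess x v‖ ≤ L * ‖v‖ ^ 2 / 2 * t ^ 2 := by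
  set h : ℝ → EE := fun t => g (x + t • v) - g x - t • hess x v with hh
  have hd : ∀ t : ℝ, HasDerivAt h (hess (x + t • v) v - hess x v) t := by
    intro t
    have hγ : HasDerivAt (fun s : ℝ => x + s • v) v t := by
      simpa using ((hasDerivAt_id t).smul_const v).const_add x
    have h1 : HasDerivAt (fun s : ℝ => g (x + s • v)) (hess (x + t • v) v) t := by
      exact (hhess (x + t • v)).comp_hasDerivAt t hγ
    have h2 : HasDerivAt (fun s : ℝ => g x + s • hess x v) (hess x v) t := by
      simpa using ((hasDerivAt_id t).smul_const (hess x v)).const_add (g x)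
    have := h1.sub h2
    refine this.congr_of_eventuallyEq (Filter.Eventually.of_forall fun s => ?_)
    simp [hh, sub_sub]
  have key := image_norm_le_of_norm_deriv_right_le_deriv_boundary (a := 0) (b := 1)
    (f := h) (f' := fun t => hess (x + t • v) v - hess x v)
    (fun t _ => (hd t).continuousAt.continuousWithinAt)
    (fun t _ => (hd t).hasDerivWithinAt.mono (fun s hs => hs))
    (B := fun t => L * ‖v‖ ^ 2 / 2 * t ^ 2) (B' := fun t => L * ‖v‖ ^ 2 * t)
    (by simp [hh])
    (fun t => by
      have := ((hasDerivAt_pow 2 t).const_mul (L * ‖v‖ ^ 2 / 2))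
      exact this.congr_deriv (by push_cast; ring))
    (fun t ht => by
      have h1 : ‖hess (x + t • v) v - hess x v‖ ≤ ‖hess (x + t • v) - hess x‖ * ‖v‖ := by
        have h := (hess (x + t • v) - hess x).le_opNorm v
        rwa [ContinuousLinearMap.sub_apply] at h
      have h2 : ‖hess (x + t • v) - hess x‖ ≤ L * (t * ‖v‖) := by
        have h := hLip (x + t • v) x
        rwa [add_sub_cancel_left, norm_smul, Real.norm_eq_abs, abs_of_nonneg ht.1] at h
      calc ‖hess (x + t • v) v - hess x v‖ ≤ L * (t * ‖v‖) * ‖v‖ := by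
            refine h1.trans (mul_le_mul_of_nonneg_right h2 (norm_nonneg _))
        _ = L * ‖v‖ ^ 2 * t := by ring)
  intro t ht
  exact key ht

/-- Second-order Taylor estimate for `f` with Lipschitz Hessian. -/
theorem aux_f_taylor (f : EE → ℝ) (g : EE → EE) (hess : EE → EE →L[ℝ] EE) (L : ℝ)
    (hg : ∀ u, HasGradientAt f (g u) u)
    (hhess : ∀ u, HasFDerivAt g (hess u) u)
    (hLip : ∀ u v, ‖hess u - hess v‖ ≤ L * ‖u - v‖)
    (x v : EE) :
    |f (x + v) - f x - ⟪g x, v⟫ - (1/2) * ⟪hess x v, v⟫| ≤ L / 6 * ‖v‖ ^ 3 := by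
  have gradA := aux_grad_taylor g hess L hhess hLip
  set ψ : ℝ → ℝ := fun t => f (x + t • v) - f x - t * ⟪g x, v⟫
    - t ^ 2 / 2 * ⟪hess x v, v⟫ with hψ
  have hd : ∀ t : ℝ, HasDerivAt ψ
      (⟪g (x + t • v) - g x - t • hess x v, v⟫) t := by
    intro t
    have hγ : HasDerivAt (fun s : ℝ => x + s • v) v t := by
      simpa using ((hasDerivAt_id t).smul_const v).const_add x
    have h1 : HasDerivAt (fun s : ℝ => f (x + s • v)) ⟪g (x + t • v), v⟫ t := by
      have := ((hg (x + t • v)).hasFDerivAt).comp_hasDerivAt t hγ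
      simp only [toDual_apply_apply] at this
      exact this
    have h2 : HasDerivAt (fun s : ℝ => f x + (s * ⟪g x, v⟫
        + s ^ 2 / 2 * ⟪hess x v, v⟫)) (⟪g x, v⟫ + t * ⟪hess x v, v⟫) t := by
      have ha : HasDerivAt (fun s : ℝ => s * ⟪g x, v⟫) ⟪g x, v⟫ t := by
        simpa using (hasDerivAt_id t).mul_const ⟪g x, v⟫
      have hb : HasDerivAt (fun s : ℝ => s ^ 2 / 2 * ⟪hess x v, v⟫)
          (t * ⟪hess x v, v⟫) t := by
        have := ((hasDerivAt_pow 2 t).div_const 2).mul_const ⟪hess x v, v⟫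
        exact this.congr_deriv (by push_cast; ring)
      simpa using (ha.add hb).const_add (f x)
    have := h1.sub h2
    have heq : ⟪g (x + t • v), v⟫ - (⟪g x, v⟫ + t * ⟪hess x v, v⟫)
        = ⟪g (x + t • v) - g x - t • hess x v, v⟫ := by
      rw [inner_sub_left, inner_sub_left, real_inner_smul_left]; ring
    rw [heq] at this
    have hfun : ψ = fun s : ℝ => f (x + s • v) - (f x + (s * ⟪g x, v⟫
        + s ^ 2 / 2 * ⟪hess x v, v⟫)) := by
      funext s; simp [hψ]; ring
    rw [hfun]
    exact this
  have key := image_norm_le_of_norm_deriv_right_le_deriv_boundary (a := 0) (b := 1)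
    (f := ψ) (f' := fun t => ⟪g (x + t • v) - g x - t • hess x v, v⟫)
    (fun t _ => (hd t).continuousAt.continuousWithinAt)
    (fun t _ => (hd t).hasDerivWithinAt.mono (fun s hs => hs))
    (B := fun t => L * ‖v‖ ^ 3 / 6 * t ^ 3) (B' := fun t => L * ‖v‖ ^ 3 / 2 * t ^ 2)
    (by simp [hψ])
    (fun t => by
      have := (hasDerivAt_pow 3 t).const_mul (L * ‖v‖ ^ 3 / 6)
      exact this.congr_deriv (by push_cast; ring))
    (fun t ht => by
      have h1 : ‖(⟪g (x + t • v) - g x - t • hess x v, v⟫ : ℝ)‖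
          ≤ ‖g (x + t • v) - g x - t • hess x v‖ * ‖v‖ := norm_inner_le_norm _ _
      have h2 := gradA x v t (Ico_subset_Icc_self ht)
      calc ‖(⟪g (x + t • v) - g x - t • hess x v, v⟫ : ℝ)‖
          ≤ (L * ‖v‖ ^ 2 / 2 * t ^ 2) * ‖v‖ :=
            h1.trans (mul_le_mul_of_nonneg_right h2 (norm_nonneg _))
        _ = L * ‖v‖ ^ 3 / 2 * t ^ 2 := by ring)
  have h1 := key (right_mem_Icc.mpr zero_le_one)
  simp only [hψ, one_smul, one_pow, one_mul] at h1
  rw [Real.norm_eq_abs] at h1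
  have heq : L * ‖v‖ ^ 3 / 6 * 1 = L / 6 * ‖v‖ ^ 3 := by ring
  rw [heq] at h1
  exact h1

end auxNewton

/-- The componentwise estimate from the proof of Theorem 3.2 of the paper: if `d` satisfies the
Newton-direction interpolating condition at `y` with `z = ∇²f(x)(y − x)`, then the component of
the error to the exact Newton direction along `z` is bounded by `(L/6) ‖y − x‖³`. -/
theorem newton_direction_componentwise_error
    {n : ℕ} (f : EuclideanSpace ℝ (Fin n) → ℝ)
    (g : EuclideanSpace ℝ (Fin n) → EuclideanSpace ℝ (Fin n))
    (hess : EuclideanSpace ℝ (Fin n) → EuclideanSpace ℝ (Fin n) →L[ℝ] EuclideanSpace ℝ (Fin n))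
    (L : ℝ)
    (hg : ∀ u, HasGradientAt f (g u) u)
    (hhess : ∀ u, HasFDerivAt g (hess u) u)
    (hLip : ∀ u v, ‖hess u - hess v‖ ≤ L * ‖u - v‖)
    (x y : EuclideanSpace ℝ (Fin n))
    -- invertibility of `∇²f(x)`, with inverse `Hinv`:
    (Hinv : EuclideanSpace ℝ (Fin n) →L[ℝ] EuclideanSpace ℝ (Fin n))
    (hinv₁ : ∀ u, Hinv (hess x u) = u) (hinv₂ : ∀ u, hess x (Hinv u) = u)
    (z : EuclideanSpace ℝ (Fin n)) (hz : z = hess x (y - x))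
    (d : EuclideanSpace ℝ (Fin n))
    (hd : ⟪z, d⟫ = -f y + f x + (1 / 2) * ⟪y - x, z⟫) :
    |⟪z, -Hinv (g x) - d⟫| ≤ L / 6 * ‖y - x‖ ^ 3 := by
  subst hz
  have hsym := aux_hess_symm f g hess hg hhess x
  have s1 : ⟪hess x (y - x), -Hinv (g x)⟫ = -⟪g x, y - x⟫ := by
    rw [hsym, map_neg, hinv₂, inner_neg_left]
  have s2 : ⟪y - x, hess x (y - x)⟫ = ⟪hess x (y - x), y - x⟫ := real_inner_comm _ _
  have E1 : ⟪hess x (y - x), -Hinv (g x) - d⟫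
      = f y - f x - ⟪g x, y - x⟫ - (1/2) * ⟪hess x (y - x), y - x⟫ := by
    rw [inner_sub_right, s1, hd, s2]; ring
  have ht := aux_f_taylor f g hess L hg hhess hLip x (y - x)
  rw [add_sub_cancel] at ht
  rw [E1]
  exact ht
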